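/- Let G be a non-discrete Hausdorff topological group, U an identity neighborhood in G, and E, F finite subsets of G. Then there exists an injective map φ : F → G such that φ(x) ∈ U·x for every x ∈ F, and φ(F) ∩ g·φ(F) = ∅ for every g ∈ E with g ≠ e. -/

import Mathlib

open Filter Topology

private lemma avoid_aux {G : Type*} [Group G] [TopologicalSpace G] [IsTopologicalGroup G]
    [T2Space G] (hnd : ¬ DiscreteTopology G) (x : G) (V : Set G) (hV : V ∈ nhds x)
    (D : Finset G) : ∃ y ∈ V, y ∉ D := by
  classical
  have h1 : (𝓝[≠] x).NeBot := by
    rcases Filter.eq_or_neBot (𝓝[≠] x) with h | h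
    · exfalso
      apply hnd
      rw [discreteTopology_iff_isOpen_singleton_one]
      have hx : IsOpen ({x} : Set G) := (isOpen_singleton_iff_punctured_nhds x).mpr h
      have := (Homeomorph.mulRight x⁻¹).isOpen_image.mpr hx
      simpa using this
    · exact h
  have hc : ((↑(D.erase x) : Set G))ᶜ ∈ nhds x := by
    apply (D.erase x).finite_toSet.isClosed.isOpen_compl.mem_nhds
    simp
  have hmem : (V ∩ ((↑(D.erase x) : Set G))ᶜ) ∩ {x}ᶜ ∈ 𝓝[≠] x :=
    Filter.inter_mem (nhdsWithin_le_nhds (Filter.inter_mem hV hc)) self_mem_nhdsWithin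
  obtain ⟨y, ⟨hyV, hyD⟩, hyx⟩ := h1.nonempty_of_mem hmem
  refine ⟨y, hyV, fun hy => hyD ?_⟩
  simp only [Set.mem_compl_iff, Set.mem_singleton_iff] at hyx
  exact Finset.mem_coe.mpr (Finset.mem_erase.mpr ⟨hyx, hy⟩)

private lemma key {G : Type*} [Group G] [TopologicalSpace G] [IsTopologicalGroup G] [T2Space G]
    (hnd : ¬ DiscreteTopology G) (U : Set G) (hU : U ∈ nhds (1 : G)) (E : Finset G)
    (F : Finset G) :
    ∃ φ : G → G, Set.InjOn φ ↑F ∧ (∀ x ∈ F, φ x * x⁻¹ ∈ U) ∧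
      ∀ g ∈ E, g ≠ 1 → ∀ x ∈ F, ∀ y ∈ F, φ x ≠ g * φ y := by
  classical
  induction F using Finset.induction_on with
  | empty => exact ⟨id, by simp, by simp, by simp⟩
  | @insert a F ha ih =>
    obtain ⟨φ, hinj, hmem, hsep⟩ := ih
    have hcont : ContinuousAt (fun v : G => v * a⁻¹) a := by fun_prop
    have hVa : (fun v : G => v * a⁻¹) ⁻¹' U ∈ nhds a :=
      hcont.preimage_mem_nhds (by simpa using hU)
    set D : Finset G := (F.image φ ∪ E.biUnion (fun g => F.image (fun y => g * φ y))) ∪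
        E.biUnion (fun g => F.image (fun y => g⁻¹ * φ y)) with hD
    obtain ⟨v, hvU, hvD⟩ := avoid_aux hnd a _ hVa D
    have hvF : ∀ y ∈ F, v ≠ φ y := fun y hy h =>
      hvD (Finset.mem_union_left _ (Finset.mem_union_left _
        (Finset.mem_image.mpr ⟨y, hy, h.symm⟩)))
    have hvg : ∀ g ∈ E, ∀ y ∈ F, v ≠ g * φ y := fun g hg y hy h =>
      hvD (Finset.mem_union_left _ (Finset.mem_union_right _
        (Finset.mem_biUnion.mpr ⟨g, hg, Finset.mem_image.mpr ⟨y, hy, h.symm⟩⟩)))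
    have hvg' : ∀ g ∈ E, ∀ y ∈ F, φ y ≠ g * v := fun g hg y hy h =>
      hvD (Finset.mem_union_right _
        (Finset.mem_biUnion.mpr ⟨g, hg, Finset.mem_image.mpr ⟨y, hy, by rw [h]; group⟩⟩))
    refine ⟨Function.update φ a v, ?_, ?_, ?_⟩
    · intro x hx y hy hxy
      simp only [Finset.coe_insert, Set.mem_insert_iff, Finset.mem_coe] at hx hy
      rcases hx with hxa | hxF <;> rcases hy with hya | hyF
      · rw [hxa, hya]
      · subst hxa
        rw [Function.update_self, Function.update_of_ne (by rintro rfl; exact ha hyF)] at hxy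
        exact absurd hxy (hvF y hyF)
      · subst hya
        rw [Function.update_self, Function.update_of_ne (by rintro rfl; exact ha hxF)] at hxy
        exact absurd hxy.symm (hvF x hxF)
      · rw [Function.update_of_ne (by rintro rfl; exact ha hxF),
          Function.update_of_ne (by rintro rfl; exact ha hyF)] at hxy
        exact hinj hxF hyF hxy
    · intro x hx
      rcases Finset.mem_insert.mp hx with hxa | hxF
      · subst hxa; rw [Function.update_self]; exact hvU
      · rw [Function.update_of_ne (by rintro rfl; exact ha hxF)]
        exact hmem x hxF
    · intro g hg hg1 x hx y hy
      rcases Finset.mem_insert.mp hx with hxa | hxF <;> rcases Finset.mem_insert.mp hy with hya | hyF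
      · subst hxa; subst hya
        rw [Function.update_self]
        intro h
        exact hg1 (mul_right_cancel (show g * v = 1 * v by rw [one_mul, ← h]))
      · subst hxa
        rw [Function.update_self, Function.update_of_ne (by rintro rfl; exact ha hyF)]
        exact hvg g hg y hyF
      · subst hya
        rw [Function.update_self, Function.update_of_ne (by rintro rfl; exact ha hxF)]
        exact hvg' g hg x hxF
      · rw [Function.update_of_ne (by rintro rfl; exact ha hxF),
          Function.update_of_ne (by rintro rfl; exact ha hyF)]
        exact hsep g hg hg1 x hxF y hyF

/-- In a non-discrete Hausdorff topological group, for any identity neighborhood `U` and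
finite sets `E, F`, there is an injection `φ : F → G` with `φ(x) ∈ Ux` for all `x ∈ F` and
`φ(F) ∩ g·φ(F) = ∅` for every `g ∈ E`, `g ≠ e`. -/
theorem stmt_4 {G : Type*} [Group G] [TopologicalSpace G] [IsTopologicalGroup G] [T2Space G]
    (hnd : ¬ DiscreteTopology G) (U : Set G) (hU : U ∈ nhds (1 : G)) (E F : Finset G) :
    ∃ φ : G → G, Set.InjOn φ ↑F ∧ (∀ x ∈ F, φ x * x⁻¹ ∈ U) ∧
      ∀ g ∈ E, g ≠ 1 → (φ '' ↑F) ∩ ((g * ·) '' (φ '' ↑F)) = ∅ := by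
  obtain ⟨φ, hinj, hmem, hsep⟩ := key hnd U hU E F
  refine ⟨φ, hinj, hmem, fun g hg hg1 => ?_⟩
  ext z
  simp only [Set.mem_inter_iff, Set.mem_image, Set.mem_empty_iff_false, iff_false]
  rintro ⟨⟨x, hx, rfl⟩, w, ⟨y, hy, rfl⟩, h⟩
  exact hsep g hg hg1 x hx y hy h.symm
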